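/- Fix constants σ̄ > σ̃ > 0 and for each α > 0 let R(α) be the unique positive solution of α·P_0(R)/(α + R·P_0(R)) = σ̃/(2σ̄). Then R(α) is strictly increasing in α, R(α) → 0 as α → 0⁺, and R(α) → R_D as α → ∞, where R_D is the unique positive root of P_0(R_D) = σ̃/(2σ̄). -/
import Mathlib


open Real Filter Set

/-- Modified Bessel function of the first kind of (integer) order `n`. -/
noncomputable def besselI (n : ℕ) (r : ℝ) : ℝ :=
  ∑' k : ℕ, (1 / (k.factorial * Real.Gamma (n + k + 1))) * (r / 2) ^ (n + 2 * k)

/-- `P n r = I_{n+1}(r) / (r * I_n(r))`. -/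
noncomputable def P (n : ℕ) (r : ℝ) : ℝ := besselI (n + 1) r / (r * besselI n r)


noncomputable def AA (k : ℕ) : ℝ := ((k.factorial : ℝ) ^ 2)⁻¹
noncomputable def BB (k : ℕ) : ℝ := ((k.factorial : ℝ) * (k + 1).factorial)⁻¹

lemma AA_pos (k : ℕ) : 0 < AA k := by
  have := k.factorial_pos
  unfold AA; positivity

lemma BB_pos (k : ℕ) : 0 < BB k := by
  have := k.factorial_pos
  have := (k+1).factorial_pos
  unfold BB; positivity

lemma AA_le (k : ℕ) : AA k ≤ ((k.factorial : ℝ))⁻¹ := by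
  unfold AA
  rw [sq]
  apply inv_anti₀
  · exact_mod_cast k.factorial_pos
  · nlinarith [k.factorial_pos, (show (1:ℝ) ≤ (k.factorial:ℝ) by exact_mod_cast k.factorial_pos)]

lemma BB_le (k : ℕ) : BB k ≤ ((k.factorial : ℝ))⁻¹ := by
  unfold BB
  apply inv_anti₀
  · exact_mod_cast k.factorial_pos
  · nlinarith [k.factorial_pos, (show (1:ℝ) ≤ (k.factorial:ℝ) by exact_mod_cast k.factorial_pos),
      (show (1:ℝ) ≤ ((k+1).factorial:ℝ) by exact_mod_cast (k+1).factorial_pos)]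

lemma summable_AA {x : ℝ} (hx : 0 ≤ x) : Summable (fun k : ℕ => AA k * x ^ k) := by
  refine Summable.of_nonneg_of_le (fun k => mul_nonneg (AA_pos k).le (by positivity)) (fun k => ?_)
    (Real.summable_pow_div_factorial x)
  rw [div_eq_mul_inv, mul_comm]
  exact mul_le_mul_of_nonneg_left (AA_le k) (by positivity)

lemma summable_BB {x : ℝ} (hx : 0 ≤ x) : Summable (fun k : ℕ => BB k * x ^ k) := by
  refine Summable.of_nonneg_of_le (fun k => mul_nonneg (BB_pos k).le (by positivity)) (fun k => ?_)
    (Real.summable_pow_div_factorial x)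
  rw [div_eq_mul_inv, mul_comm]
  exact mul_le_mul_of_nonneg_left (BB_le k) (by positivity)

noncomputable def gg (t : ℝ) : ℝ := ∑' k : ℕ, AA k * t ^ k
noncomputable def hh (t : ℝ) : ℝ := ∑' k : ℕ, BB k * t ^ k

lemma one_le_gg {t : ℝ} (ht : 0 ≤ t) : 1 ≤ gg t := by
  have h0 : AA 0 * t ^ 0 = 1 := by simp [AA]
  calc (1:ℝ) = AA 0 * t ^ 0 := h0.symm
    _ ≤ gg t := Summable.le_tsum (summable_AA ht) 0 (fun k _ => mul_nonneg (AA_pos k).le (by positivity))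

lemma one_le_hh {t : ℝ} (ht : 0 ≤ t) : 1 ≤ hh t := by
  have h0 : BB 0 * t ^ 0 = 1 := by simp [BB, Nat.factorial]
  calc (1:ℝ) = BB 0 * t ^ 0 := h0.symm
    _ ≤ hh t := Summable.le_tsum (summable_BB ht) 0 (fun k _ => mul_nonneg (BB_pos k).le (by positivity))

lemma hh_le_gg {t : ℝ} (ht : 0 ≤ t) : hh t ≤ gg t := by
  refine Summable.tsum_le_tsum (fun k => ?_) (summable_BB ht) (summable_AA ht)
  refine mul_le_mul_of_nonneg_right ?_ (by positivity)
  unfold AA BB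
  apply inv_anti₀
  · positivity
  · rw [sq]
    refine mul_le_mul_of_nonneg_left ?_ (by positivity)
    exact_mod_cast Nat.factorial_le (Nat.le_succ k)

lemma besselI_zero (r : ℝ) : besselI 0 r = gg ((r / 2) ^ 2) := by
  unfold besselI gg
  congr 1
  funext k
  have hg : Real.Gamma ((0:ℕ) + (k:ℝ) + 1) = (k.factorial : ℝ) := by
    rw [show ((0:ℕ):ℝ) + (k:ℝ) + 1 = (k:ℝ) + 1 by push_cast; ring]
    exact Real.Gamma_nat_eq_factorial k
  rw [hg, ← pow_mul]
  have hk : (k.factorial : ℝ) ≠ 0 := by exact_mod_cast k.factorial_ne_zero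
  unfold AA
  rw [show 0 + 2 * k = 2 * k by ring, sq]
  ring

lemma besselI_one (r : ℝ) : besselI 1 r = (r / 2) * hh ((r / 2) ^ 2) := by
  unfold besselI hh
  rw [← tsum_mul_left]
  congr 1
  funext k
  have hg : Real.Gamma ((1:ℕ) + (k:ℝ) + 1) = ((k+1).factorial : ℝ) := by
    rw [show ((1:ℕ):ℝ) + (k:ℝ) + 1 = ((k+1:ℕ):ℝ) + 1 by push_cast; ring]
    exact Real.Gamma_nat_eq_factorial (k+1)
  rw [hg, ← pow_mul]
  have hk : (k.factorial : ℝ) ≠ 0 := by exact_mod_cast k.factorial_ne_zero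
  have hk1 : ((k+1).factorial : ℝ) ≠ 0 := by exact_mod_cast (k+1).factorial_ne_zero
  unfold BB
  rw [show 1 + 2 * k = 2 * k + 1 by ring, pow_succ]
  ring

lemma P_eq {r : ℝ} (hr : 0 < r) :
    P 0 r = hh ((r / 2) ^ 2) / (2 * gg ((r / 2) ^ 2)) := by
  have ht : (0:ℝ) ≤ (r / 2) ^ 2 := sq_nonneg _
  have hg : (0:ℝ) < gg ((r / 2) ^ 2) := lt_of_lt_of_le one_pos (one_le_gg ht)
  unfold P
  rw [besselI_zero, besselI_one]
  rw [div_eq_div_iff (by positivity) (by positivity)]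
  ring

lemma BB_eq (k : ℕ) : BB k = ((k.factorial : ℝ) ^ 2 * (k + 1))⁻¹ := by
  unfold BB
  rw [Nat.factorial_succ]
  push_cast
  ring_nf

lemma key_base {k l : ℕ} (hlk : l ≤ k) {s t : ℝ} (hs : 0 < s) (hst : s < t) :
    0 ≤ (AA k * BB l - AA l * BB k) * (t ^ k * s ^ l - s ^ k * t ^ l) := by
  have ht : 0 < t := hs.trans hst
  have hf1 : AA l * BB k ≤ AA k * BB l := by
    unfold AA
    rw [BB_eq, BB_eq, ← mul_inv, ← mul_inv]
    apply inv_anti₀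
    · have := k.factorial_pos
      have := l.factorial_pos
      positivity
    · have h1 : ((l:ℝ) + 1) ≤ (k:ℝ) + 1 := by
        have : (l:ℝ) ≤ (k:ℝ) := by exact_mod_cast hlk
        linarith
      have hk2 : (0:ℝ) < (k.factorial : ℝ) ^ 2 := by
        have := k.factorial_pos; positivity
      have hl2 : (0:ℝ) < (l.factorial : ℝ) ^ 2 := by
        have := l.factorial_pos; positivity
      nlinarith [mul_pos hk2 hl2]
  have hf2 : s ^ k * t ^ l ≤ t ^ k * s ^ l := by
    obtain ⟨m, rfl⟩ := Nat.exists_eq_add_of_le hlk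
    rw [pow_add, pow_add]
    have hm : s ^ m ≤ t ^ m := pow_le_pow_left₀ hs.le hst.le m
    nlinarith [mul_pos (pow_pos hs l) (pow_pos ht l)]
  exact mul_nonneg (by linarith) (by linarith)

lemma key_nonneg (k l : ℕ) {s t : ℝ} (hs : 0 < s) (hst : s < t) :
    0 ≤ (AA k * BB l - AA l * BB k) * (t ^ k * s ^ l - s ^ k * t ^ l) := by
  rcases le_total l k with h | h
  · exact key_base h hs hst
  · have := key_base h hs hst
    nlinarith [this]

lemma key_pos {s t : ℝ} (hs : 0 < s) (hst : s < t) :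
    0 < (AA 1 * BB 0 - AA 0 * BB 1) * (t ^ 1 * s ^ 0 - s ^ 1 * t ^ 0) := by
  have h1 : AA 1 * BB 0 - AA 0 * BB 1 = 1 / 2 := by
    norm_num [AA, BB, Nat.factorial]
  rw [h1]
  simp only [pow_one, pow_zero, mul_one, one_mul]
  linarith

set_option maxHeartbeats 1000000 in
lemma cross {s t : ℝ} (hs : 0 < s) (hst : s < t) : hh t * gg s < hh s * gg t := by
  have ht : 0 < t := hs.trans hst
  have nAs : Summable (fun k : ℕ => ‖AA k * s ^ k‖) := by
    refine (summable_AA hs.le).congr fun k => ?_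
    exact (Real.norm_of_nonneg (mul_nonneg (AA_pos k).le (by positivity))).symm
  have nAt : Summable (fun k : ℕ => ‖AA k * t ^ k‖) := by
    refine (summable_AA ht.le).congr fun k => ?_
    exact (Real.norm_of_nonneg (mul_nonneg (AA_pos k).le (by positivity))).symm
  have nBs : Summable (fun k : ℕ => ‖BB k * s ^ k‖) := by
    refine (summable_BB hs.le).congr fun k => ?_
    exact (Real.norm_of_nonneg (mul_nonneg (BB_pos k).le (by positivity))).symm
  have nBt : Summable (fun k : ℕ => ‖BB k * t ^ k‖) := by
    refine (summable_BB ht.le).congr fun k => ?_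
    exact (Real.norm_of_nonneg (mul_nonneg (BB_pos k).le (by positivity))).symm
  set u : ℕ × ℕ → ℝ := fun p => BB p.1 * s ^ p.1 * (AA p.2 * t ^ p.2) with hu
  set v : ℕ × ℕ → ℝ := fun p => BB p.1 * t ^ p.1 * (AA p.2 * s ^ p.2) with hv
  have Su : Summable u := summable_mul_of_summable_norm nBs nAt
  have Sv : Summable v := summable_mul_of_summable_norm nBt nAs
  have e1 : hh s * gg t = ∑' p : ℕ × ℕ, u p := tsum_mul_tsum_of_summable_norm nBs nAt
  have e2 : hh t * gg s = ∑' p : ℕ × ℕ, v p := tsum_mul_tsum_of_summable_norm nBt nAs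
  have Suv : Summable (fun p => u p - v p) := Su.sub Sv
  have Sswap : Summable (fun p : ℕ × ℕ => u (p.2, p.1) - v (p.2, p.1)) := by
    have : Summable ((fun p => u p - v p) ∘ (Equiv.prodComm ℕ ℕ)) :=
      (Equiv.prodComm ℕ ℕ).summable_iff.mpr Suv
    exact this.congr fun p => rfl
  have hswap : ∑' p : ℕ × ℕ, (u (p.2, p.1) - v (p.2, p.1)) = ∑' p : ℕ × ℕ, (u p - v p) := by
    rw [← (Equiv.prodComm ℕ ℕ).tsum_eq (fun p => u p - v p)]
    rfl
  set w : ℕ × ℕ → ℝ := fun p => (u p - v p) + (u (p.2, p.1) - v (p.2, p.1)) with hwdef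
  have Sw : Summable w := Suv.add Sswap
  have keyw : ∀ p : ℕ × ℕ,
      w p = (AA p.1 * BB p.2 - AA p.2 * BB p.1) * (t ^ p.1 * s ^ p.2 - s ^ p.1 * t ^ p.2) := by
    intro p
    simp only [hwdef, hu, hv]
    ring
  have hsumw : ∑' p, w p = ∑' p : ℕ × ℕ, (u p - v p) + ∑' p : ℕ × ℕ, (u (p.2, p.1) - v (p.2, p.1)) :=
    Summable.tsum_add Suv Sswap
  have hD : ∑' p, w p = 2 * (hh s * gg t - hh t * gg s) := by
    rw [hsumw, hswap, Summable.tsum_sub Su Sv, ← e1, ← e2]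
    ring
  have hwpos : 0 < ∑' p, w p := by
    have hle : w (1, 0) ≤ ∑' p, w p := by
      refine Summable.le_tsum Sw (1, 0) fun p _ => ?_
      rw [keyw p]
      exact key_nonneg p.1 p.2 hs hst
    have : 0 < w (1, 0) := by
      rw [keyw (1, 0)]
      exact key_pos hs hst
    linarith
  linarith [hD ▸ hwpos]

lemma P_pos {r : ℝ} (hr : 0 < r) : 0 < P 0 r := by
  have ht : (0:ℝ) ≤ (r / 2) ^ 2 := sq_nonneg _
  have hg := one_le_gg ht
  have hhh := one_le_hh ht
  rw [P_eq hr]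
  positivity

lemma P_le_half {r : ℝ} (hr : 0 < r) : P 0 r ≤ 1 / 2 := by
  have ht : (0:ℝ) ≤ (r / 2) ^ 2 := sq_nonneg _
  have hg := one_le_gg ht
  have hle := hh_le_gg ht
  rw [P_eq hr, div_le_div_iff₀ (by linarith) two_pos]
  linarith

lemma P_strictAnti {r1 r2 : ℝ} (h1 : 0 < r1) (h12 : r1 < r2) : P 0 r2 < P 0 r1 := by
  have h2 : 0 < r2 := h1.trans h12
  have hq : (r1 / 2) ^ 2 < (r2 / 2) ^ 2 := by
    apply pow_lt_pow_left₀ (by linarith) (by linarith)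
    norm_num
  have hq1 : (0:ℝ) < (r1 / 2) ^ 2 := by positivity
  have hc := cross hq1 hq
  have hg1 := one_le_gg (sq_nonneg (r1 / 2))
  have hg2 := one_le_gg (sq_nonneg (r2 / 2))
  rw [P_eq h1, P_eq h2, div_lt_div_iff₀ (by linarith) (by linarith)]
  nlinarith

lemma P_anti {r1 r2 : ℝ} (h1 : 0 < r1) (h12 : r1 ≤ r2) : P 0 r2 ≤ P 0 r1 := by
  rcases eq_or_lt_of_le h12 with rfl | h
  · exact le_refl _
  · exact (P_strictAnti h1 h).le

theorem R_monotone_and_limits (σbar σtil : ℝ) (hσ : σtil < σbar) (hσt : 0 < σtil)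
    (R : ℝ → ℝ) (hR : ∀ α : ℝ, 0 < α → 0 < R α ∧
      α * P 0 (R α) / (α + R α * P 0 (R α)) = σtil / (2 * σbar))
    (RD : ℝ) (hRD : 0 < RD) (hRDeq : P 0 RD = σtil / (2 * σbar)) :
    StrictMonoOn R (Set.Ioi 0) ∧
    Tendsto R (nhdsWithin 0 (Set.Ioi 0)) (nhds 0) ∧
    Tendsto R atTop (nhds RD) := by
  have hb : 0 < σbar := hσt.trans hσ
  set c : ℝ := σtil / (2 * σbar) with hcdef
  have hc0 : 0 < c := by positivity
  have hc : c < 1 / 2 := by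
    rw [hcdef, div_lt_div_iff₀ (by positivity) two_pos]
    linarith
  -- key facts for each α > 0
  have key : ∀ α : ℝ, 0 < α → 0 < R α ∧ c < P 0 (R α) ∧
      R α / α = 1 / c - 1 / P 0 (R α) := by
    intro α hα
    obtain ⟨hr, heq⟩ := hR α hα
    have hp : 0 < P 0 (R α) := P_pos hr
    have hden : 0 < α + R α * P 0 (R α) := by positivity
    rw [div_eq_iff hden.ne'] at heq
    have hpc : c < P 0 (R α) := by
      by_contra hcon
      push_neg at hcon
      nlinarith [mul_pos (mul_pos hc0 hr) hp, mul_nonneg hα.le (sub_nonneg.mpr hcon)]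
    refine ⟨hr, hpc, ?_⟩
    rw [div_sub_div _ _ hc0.ne' hp.ne', div_eq_div_iff hα.ne' (by positivity)]
    linear_combination -heq
  -- upper bound R α < RD
  have hub : ∀ α : ℝ, 0 < α → R α < RD := by
    intro α hα
    obtain ⟨hr, hpc, _⟩ := key α hα
    by_contra hcon
    push_neg at hcon
    have := P_anti hRD hcon
    rw [hRDeq] at this
    linarith
  refine ⟨?_, ?_, ?_⟩
  · -- strict monotonicity
    intro α hα β hβ hαβ
    simp only [Set.mem_Ioi] at hα hβ
    by_contra hcon
    push_neg at hcon
    obtain ⟨hrα, hpcα, hratα⟩ := key α hα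
    obtain ⟨hrβ, hpcβ, hratβ⟩ := key β hβ
    have hpβ : 0 < P 0 (R β) := by linarith
    have hanti : P 0 (R α) ≤ P 0 (R β) := P_anti hrβ hcon
    have h1 : R α / α ≤ R β / β := by
      have hinv : 1 / P 0 (R β) ≤ 1 / P 0 (R α) :=
        one_div_le_one_div_of_le (by linarith) hanti
      rw [hratα, hratβ]
      linarith
    have h2 : R β / β < R α / α := by
      have ha : R β / β ≤ R α / β := by
        apply div_le_div_of_nonneg_right hcon hβ.le
      have hb2 : R α / β < R α / α := div_lt_div_of_pos_left hrα hα hαβ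
      linarith
    linarith
  · -- tendsto 0
    have hbnd : ∀ α : ℝ, 0 < α → R α ≤ (1 / c - 2) * α := by
      intro α hα
      obtain ⟨hr, hpc, hrat⟩ := key α hα
      have hp : 0 < P 0 (R α) := by linarith
      have h2 : 2 ≤ 1 / P 0 (R α) := by
        have h := one_div_le_one_div_of_le hp (P_le_half hr)
        norm_num at h
        simpa [one_div] using h
      have : R α / α ≤ 1 / c - 2 := by rw [hrat]; linarith
      calc R α = R α / α * α := by field_simp
        _ ≤ (1 / c - 2) * α := by
            exact mul_le_mul_of_nonneg_right this hα.le
    have hup : Tendsto (fun α : ℝ => (1 / c - 2) * α) (nhdsWithin 0 (Set.Ioi 0)) (nhds 0) := by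
      have h : Tendsto (fun α : ℝ => (1 / c - 2) * α) (nhds 0) (nhds ((1 / c - 2) * 0)) :=
        tendsto_id.const_mul _
      rw [mul_zero] at h
      exact h.mono_left nhdsWithin_le_nhds
    refine tendsto_of_tendsto_of_tendsto_of_le_of_le' tendsto_const_nhds hup ?_ ?_
    · filter_upwards [self_mem_nhdsWithin] with α hα
      exact ((hR α hα).1).le
    · filter_upwards [self_mem_nhdsWithin] with α hα
      exact hbnd α hα
  · -- tendsto RD
    rw [Metric.tendsto_atTop]
    intro ε hε
    set δ : ℝ := min ε (RD / 2) with hδdef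
    have hδ : 0 < δ := lt_min hε (by linarith)
    have hδε : δ ≤ ε := min_le_left _ _
    have hδRD : 0 < RD - δ := by
      have : δ ≤ RD / 2 := min_le_right _ _
      linarith
    have hq : c < P 0 (RD - δ) := by
      have h := P_strictAnti hδRD (by linarith : RD - δ < RD)
      rw [hRDeq] at h
      linarith
    have hq0 : 0 < P 0 (RD - δ) := P_pos hδRD
    set q : ℝ := P 0 (RD - δ) with hqdef
    have hgap : 0 < 1 / c - 1 / q := by
      have := one_div_lt_one_div_of_lt hc0 hq
      linarith
    refine ⟨max 1 (RD / (1 / c - 1 / q) + 1), fun α hαge => ?_⟩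
    have hα : 0 < α := lt_of_lt_of_le one_pos ((le_max_left _ _).trans hαge)
    obtain ⟨hr, hpc, hrat⟩ := key α hα
    have hp : 0 < P 0 (R α) := by linarith
    have hαgt : RD / (1 / c - 1 / q) < α :=
      lt_of_lt_of_le (lt_add_one _) ((le_max_right _ _).trans hαge)
    have h3 : RD / α < 1 / c - 1 / q := by
      rw [div_lt_iff₀ hα]
      have := (div_lt_iff₀ hgap).mp hαgt
      nlinarith
    have h4 : 1 / q < 1 / P 0 (R α) := by
      have hle : R α / α ≤ RD / α := div_le_div_of_nonneg_right (hub α hα).le hα.le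
      rw [hrat] at hle
      linarith
    have h5 : P 0 (R α) < q := lt_of_one_div_lt_one_div hq0 h4
    have h6 : RD - δ < R α := by
      by_contra hcon
      push_neg at hcon
      have := P_anti hr hcon
      rw [← hqdef] at this
      linarith
    have h7 : R α < RD := hub α hα
    rw [Real.dist_eq, abs_lt]
    constructor <;> linarith
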